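/- arXiv:2205.05527 — 3 statements merged into one kernel-verified Lean document; each statement's English description precedes it below -/
import Mathlib

section
/- Fix $\tilde S_{vv}, \tilde S_{zz}, \tilde S_{vz}, \tilde S_{zv} > 0$ and $p_v, p_z > 0$. Define $E_t(m) = \frac{p_v^2 m^2 \tilde S_{vv} + p_z^2 \tilde S_{zz}}{p_v^2 m^2 \tilde S_{vv} + p_z^2 \tilde S_{zz} + m p_z p_v(\tilde S_{vz}+\tilde S_{zv})}$ for real $m \ge 1$. Then $E_t(m)$ is minimized (over real $m > 0$) at $m^* = \frac{p_z}{p_v}\sqrt{\tilde S_{zz}/\tilde S_{vv}}$, and $E_t$ is not monotone in $m$ in general: it decreases for $m < m^*$ and increases for $m > m^*$. -/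
theorem qber_with_dark_counts_min (Svv Szz Svz Szv pv pz : ℝ)
    (hSvv : 0 < Svv) (hSzz : 0 < Szz) (hSvz : 0 < Svz) (hSzv : 0 < Szv)
    (hpv : 0 < pv) (hpz : 0 < pz) :
    let E : ℝ → ℝ := fun m =>
      (pv ^ 2 * m ^ 2 * Svv + pz ^ 2 * Szz) /
        (pv ^ 2 * m ^ 2 * Svv + pz ^ 2 * Szz + m * pz * pv * (Svz + Szv))
    let mstar : ℝ := (pz / pv) * Real.sqrt (Szz / Svv)
    (∀ m : ℝ, 0 < m → E mstar ≤ E m) ∧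
      StrictAntiOn E (Set.Ioc (0 : ℝ) mstar) ∧
      StrictMonoOn E (Set.Ici mstar) := by
  intro E mstar
  have hsq : Real.sqrt (Szz / Svv) ^ 2 = Szz / Svv := Real.sq_sqrt (by positivity)
  have hs : 0 < mstar := by
    have : 0 < Real.sqrt (Szz / Svv) := Real.sqrt_pos.2 (by positivity)
    positivity
  have hs2 : pv ^ 2 * mstar ^ 2 * Svv = pz ^ 2 * Szz := by
    have h1 : mstar ^ 2 = pz ^ 2 / pv ^ 2 * (Szz / Svv) := by
      show ((pz / pv) * Real.sqrt (Szz / Svv)) ^ 2 = _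
      rw [mul_pow, div_pow, hsq]
    rw [h1]
    field_simp
  have hc : 0 < pz * pv * (Svz + Szv) := by positivity
  have hD : ∀ m : ℝ, 0 < m →
      0 < pv ^ 2 * m ^ 2 * Svv + pz ^ 2 * Szz + m * pz * pv * (Svz + Szv) := by
    intro m hm; positivity
  -- E x < E y iff Nx * y < Ny * x  (cross-multiplied core inequality)
  have hlt : ∀ x y : ℝ, 0 < x → 0 < y →
      (pv ^ 2 * x ^ 2 * Svv + pz ^ 2 * Szz) * y <
        (pv ^ 2 * y ^ 2 * Svv + pz ^ 2 * Szz) * x → E x < E y := by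
    intro x y hx hy h
    show _ / _ < _ / _
    rw [div_lt_div_iff₀ (hD x hx) (hD y hy)]
    nlinarith [mul_pos hc (sub_pos.2 h)]
  have hle : ∀ x y : ℝ, 0 < x → 0 < y →
      (pv ^ 2 * x ^ 2 * Svv + pz ^ 2 * Szz) * y ≤
        (pv ^ 2 * y ^ 2 * Svv + pz ^ 2 * Szz) * x → E x ≤ E y := by
    intro x y hx hy h
    show _ / _ ≤ _ / _
    rw [div_le_div_iff₀ (hD x hx) (hD y hy)]
    nlinarith [mul_nonneg hc.le (sub_nonneg.2 h)]
  refine ⟨?_, ?_, ?_⟩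
  · intro m hm
    apply hle mstar m hs hm
    have key : (pv ^ 2 * mstar ^ 2 * Svv) * m ^ 2 = (pz ^ 2 * Szz) * m ^ 2 := by rw [hs2]
    nlinarith [key, hs, hm, mul_nonneg (by positivity : (0:ℝ) ≤ pz ^ 2 * Szz) (sq_nonneg (m - mstar))]
  · intro x hx y hy hxy
    apply hlt y x hy.1 hx.1
    have ha : 0 < pv ^ 2 * Svv := by positivity
    have h1 : x * y ≤ x * mstar := mul_le_mul_of_nonneg_left hy.2 hx.1.le
    have h2 : x * mstar < mstar * mstar :=
      mul_lt_mul_of_pos_right (lt_of_lt_of_le hxy hy.2) hs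
    have hab : pv ^ 2 * Svv * (x * y) < pz ^ 2 * Szz := by
      nlinarith [mul_le_mul_of_nonneg_left h1 ha.le, mul_lt_mul_of_pos_left h2 ha, hs2]
    nlinarith [mul_pos (sub_pos.2 hxy) (sub_pos.2 hab)]
  · intro x hx y hy hxy
    apply hlt x y (lt_of_lt_of_le hs hx) (lt_of_lt_of_le hs hy)
    have ha : 0 < pv ^ 2 * Svv := by positivity
    have hy0 : 0 < y := lt_of_lt_of_le hs hy
    have h1 : mstar * y ≤ x * y := mul_le_mul_of_nonneg_right hx hy0.le
    have h2 : mstar * mstar < mstar * y :=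
      mul_lt_mul_of_pos_left (lt_of_le_of_lt hx hxy) hs
    have hab : pz ^ 2 * Szz < pv ^ 2 * Svv * (x * y) := by
      nlinarith [mul_le_mul_of_nonneg_left h1 ha.le, mul_lt_mul_of_pos_left h2 ha, hs2]
    nlinarith [mul_pos (sub_pos.2 hxy) (sub_pos.2 hab)]
end

section
/- If $a \ge 0$, $b \ge 0$, $c > 0$, and $a m^2 \le b$ for a real $m \ge 1$ (dark counts sufficiently small), then $E(m) = \frac{am^2+b}{am^2+b+cm}$ is nonincreasing on the interval $[1, \sqrt{b/a}]$ (all of $[1,\infty)$ if $a = 0$). -/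
theorem qber_nonincreasing_small_dark (a b c : ℝ)
    (ha : 0 ≤ a) (hb : 0 ≤ b) (hc : 0 < c) :
    let E : ℝ → ℝ := fun m => (a * m ^ 2 + b) / (a * m ^ 2 + b + c * m)
    (a = 0 → AntitoneOn E (Set.Ici (1 : ℝ))) ∧
      (0 < a → AntitoneOn E (Set.Icc (1 : ℝ) (Real.sqrt (b / a)))) := by
  intro E
  have key : ∀ x y : ℝ, 1 ≤ x → 1 ≤ y → x ≤ y → a * (x * y) ≤ b → E y ≤ E x := by
    intro x y hx hy hxy hab
    have hx0 : (0:ℝ) < x := lt_of_lt_of_le one_pos hx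
    have hy0 : (0:ℝ) < y := lt_of_lt_of_le one_pos hy
    have hdx : 0 < a * x ^ 2 + b + c * x := by positivity
    have hdy : 0 < a * y ^ 2 + b + c * y := by positivity
    simp only [E]
    rw [div_le_div_iff₀ hdy hdx]
    nlinarith [mul_nonneg (mul_nonneg hc.le (sub_nonneg.2 hxy)) (sub_nonneg.2 hab)]
  constructor
  · intro ha0 x hx y hy hxy
    exact key x y hx hy hxy (by rw [ha0]; simpa using hb)
  · intro ha0 x hx y hy hxy
    have hs : Real.sqrt (b / a) * Real.sqrt (b / a) = b / a :=
      Real.mul_self_sqrt (div_nonneg hb ha)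
    have hxys : x * y ≤ b / a := by
      rw [← hs]
      have hx0 : (0:ℝ) ≤ x := le_trans zero_le_one hx.1
      exact mul_le_mul hx.2 hy.2 (le_trans zero_le_one hy.1) (Real.sqrt_nonneg _)
    have : a * (x * y) ≤ b := by
      rw [← le_div_iff₀' ha0]; exact hxys
    exact key x y hx.1 hy.1 hxy this
end

section
/- Let $\mu_y > \mu_x > 0$ and suppose $\langle s_1 \rangle = \frac{\mu_y^2 e^{\mu_x}(\langle S_{vx}\rangle + \langle S_{xv}\rangle) - \mu_x^2 e^{\mu_y}(\langle S_{vy}\rangle + \langle S_{yv}\rangle) - 2(\mu_y^2-\mu_x^2)\langle S_{vv}\rangle}{2\mu_x\mu_y(\mu_y-\mu_x)}$. If each counting rate $\langle S_{v\ell}\rangle$ (and $\langle S_{\ell v}\rangle$) is generated by a Poissonian photon-number mixture, i.e., $\langle S_{v\ell}\rangle = \sum_{k\ge 0} e^{-\mu_\ell}\frac{\mu_\ell^k}{k!} s_k$ for a common sequence $s_k \in [0,1]$, then $\langle s_1 \rangle \le s_1$, i.e., the decoy-state expression is a valid lower bound for the single-photon counting rate. -/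
theorem decoy_state_lower_bound (mux muy : ℝ) (hx : 0 < mux) (hxy : mux < muy)
    (s : ℕ → ℝ) (hs : ∀ k, s k ∈ Set.Icc (0 : ℝ) 1)
    (Svx Sxv Svy Syv Svv : ℝ)
    (hSvx : Svx = ∑' k : ℕ, Real.exp (-mux) * mux ^ k / (Nat.factorial k) * s k)
    (hSxv : Sxv = ∑' k : ℕ, Real.exp (-mux) * mux ^ k / (Nat.factorial k) * s k)
    (hSvy : Svy = ∑' k : ℕ, Real.exp (-muy) * muy ^ k / (Nat.factorial k) * s k)
    (hSyv : Syv = ∑' k : ℕ, Real.exp (-muy) * muy ^ k / (Nat.factorial k) * s k)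
    (hSvv : Svv = s 0) :
    (muy ^ 2 * Real.exp mux * (Svx + Sxv) - mux ^ 2 * Real.exp muy * (Svy + Syv) -
        2 * (muy ^ 2 - mux ^ 2) * Svv) / (2 * mux * muy * (muy - mux)) ≤ s 1 := by
  have hy : 0 < muy := hx.trans hxy
  have hs0 : ∀ k, 0 ≤ s k := fun k => (hs k).1
  have hs1 : ∀ k, s k ≤ 1 := fun k => (hs k).2
  -- summability
  have hsumgen : ∀ μ : ℝ, 0 < μ → Summable (fun k : ℕ => μ ^ k / (Nat.factorial k) * s k) := by
    intro μ hμ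
    apply Summable.of_nonneg_of_le (fun k => mul_nonneg (by positivity) (hs0 k))
      (fun k => ?_) (Real.summable_pow_div_factorial μ)
    have h1 : (0:ℝ) ≤ μ ^ k / (Nat.factorial k) := by positivity
    calc μ ^ k / (Nat.factorial k) * s k ≤ μ ^ k / (Nat.factorial k) * 1 :=
          mul_le_mul_of_nonneg_left (hs1 k) h1
      _ = μ ^ k / (Nat.factorial k) := mul_one _
  have hsx := hsumgen mux hx
  have hsy := hsumgen muy hy
  -- rewrite the given tsums
  have hTx : (∑' k : ℕ, Real.exp (-mux) * mux ^ k / (Nat.factorial k) * s k)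
      = Real.exp (-mux) * ∑' k : ℕ, mux ^ k / (Nat.factorial k) * s k := by
    rw [← tsum_mul_left]
    congr 1; funext k; ring
  have hTy : (∑' k : ℕ, Real.exp (-muy) * muy ^ k / (Nat.factorial k) * s k)
      = Real.exp (-muy) * ∑' k : ℕ, muy ^ k / (Nat.factorial k) * s k := by
    rw [← tsum_mul_left]
    congr 1; funext k; ring
  set Tx := ∑' k : ℕ, mux ^ k / (Nat.factorial k) * s k with hTxdef
  set Ty := ∑' k : ℕ, muy ^ k / (Nat.factorial k) * s k with hTydef
  -- the combined series
  set g : ℕ → ℝ := fun k => muy ^ 2 * (mux ^ k / (Nat.factorial k) * s k)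
      - mux ^ 2 * (muy ^ k / (Nat.factorial k) * s k) with hg
  have hsumg : Summable g := (hsx.mul_left _).sub (hsy.mul_left _)
  have htsumg : ∑' k, g k = muy ^ 2 * Tx - mux ^ 2 * Ty := by
    rw [hg, Summable.tsum_sub (hsx.mul_left _) (hsy.mul_left _), tsum_mul_left, tsum_mul_left]
  set h : ℕ → ℝ := fun k => if k = 0 then (muy ^ 2 - mux ^ 2) * s 0
      else if k = 1 then mux * muy * (muy - mux) * s 1 else 0 with hh
  have hsumh : Summable h := by
    apply summable_of_ne_finset_zero (s := {0, 1})
    intro k hk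
    simp only [Finset.mem_insert, Finset.mem_singleton, not_or] at hk
    simp [hh, hk.1, hk.2]
  have hgle : ∀ k, g k ≤ h k := by
    intro k
    match k with
    | 0 => simp [hg, hh]; ring_nf; rfl
    | 1 => simp [hg, hh]; ring_nf; rfl
    | (n+2) =>
      have h1 : h (n+2) = 0 := by simp [hh]
      rw [h1]
      have key : muy ^ 2 * mux ^ (n+2) ≤ mux ^ 2 * muy ^ (n+2) := by
        have : mux ^ n ≤ muy ^ n := pow_le_pow_left₀ hx.le hxy.le n
        calc muy ^ 2 * mux ^ (n+2) = mux ^ 2 * muy ^ 2 * mux ^ n := by ring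
          _ ≤ mux ^ 2 * muy ^ 2 * muy ^ n := by
              apply mul_le_mul_of_nonneg_left this; positivity
          _ = mux ^ 2 * muy ^ (n+2) := by ring
      have hf : (0:ℝ) < (Nat.factorial (n+2) : ℝ) := by positivity
      have := hs0 (n+2)
      have expand : g (n+2)
          = (muy ^ 2 * mux ^ (n+2) - mux ^ 2 * muy ^ (n+2)) * (s (n+2) / (Nat.factorial (n+2))) := by
        simp only [hg]; ring
      rw [expand]
      apply mul_nonpos_of_nonpos_of_nonneg
      · linarith
      · positivity
  have htsumh : ∑' k, h k = (muy ^ 2 - mux ^ 2) * s 0 + mux * muy * (muy - mux) * s 1 := by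
    rw [tsum_eq_sum (s := {0, 1}) (by
      intro k hk
      simp only [Finset.mem_insert, Finset.mem_singleton, not_or] at hk
      simp [hh, hk.1, hk.2])]
    simp [hh]
  have hmain : muy ^ 2 * Tx - mux ^ 2 * Ty
      ≤ (muy ^ 2 - mux ^ 2) * s 0 + mux * muy * (muy - mux) * s 1 := by
    rw [← htsumg, ← htsumh]
    exact Summable.tsum_le_tsum hgle hsumg hsumh
  -- finish
  have hD : 0 < 2 * mux * muy * (muy - mux) := by
    have : 0 < muy - mux := by linarith
    positivity
  rw [div_le_iff₀ hD]
  have hex : Real.exp mux * Real.exp (-mux) = 1 := by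
    rw [← Real.exp_add]; simp
  have hey : Real.exp muy * Real.exp (-muy) = 1 := by
    rw [← Real.exp_add]; simp
  have e1 : muy ^ 2 * Real.exp mux * (Svx + Sxv) = 2 * muy ^ 2 * Tx := by
    rw [hSvx, hSxv, hTx]
    calc muy ^ 2 * Real.exp mux * (Real.exp (-mux) * Tx + Real.exp (-mux) * Tx)
        = 2 * muy ^ 2 * (Real.exp mux * Real.exp (-mux)) * Tx := by ring
      _ = 2 * muy ^ 2 * Tx := by rw [hex]; ring
  have e2 : mux ^ 2 * Real.exp muy * (Svy + Syv) = 2 * mux ^ 2 * Ty := by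
    rw [hSvy, hSyv, hTy]
    calc mux ^ 2 * Real.exp muy * (Real.exp (-muy) * Ty + Real.exp (-muy) * Ty)
        = 2 * mux ^ 2 * (Real.exp muy * Real.exp (-muy)) * Ty := by ring
      _ = 2 * mux ^ 2 * Ty := by rw [hey]; ring
  rw [e1, e2, hSvv]
  nlinarith [hmain]
end
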